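/- Let a < 0, λ > 0, α > 0, r ≥ 0 and define ψ(z) = a z + λ z/(α − z) for z ≠ α. Suppose ρ₁ ≤ 0 < ρ₂ are the two real roots of ψ(z) = r (with ρ₁ < 0 when r > 0, and ρ₁ = 0 when r = 0 and ψ'(0) < 0), and ψ'(ρ₁) ≠ 0, ψ'(ρ₂) ≠ 0. Then 1/ψ'(ρ₁) + 1/ψ'(ρ₂) = 1/a, and consequently −ψ'(ρ₁) < ψ'(ρ₂). -/

import Mathlib

lemma deriv_psi_aux (a lam alpha : ℝ) (psi : ℝ → ℝ)
    (hpsi : ∀ z : ℝ, z ≠ alpha → psi z = a * z + lam * z / (alpha - z))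
    (x : ℝ) (hx : x ≠ alpha) :
    deriv psi x = a + lam * alpha / (alpha - x) ^ 2 := by
  have hne : alpha - x ≠ 0 := sub_ne_zero.mpr (Ne.symm hx)
  have hev : psi =ᶠ[nhds x] (fun z => a * z + lam * z / (alpha - z)) := by
    have hmem : {alpha}ᶜ ∈ nhds x := isOpen_compl_singleton.mem_nhds hx
    filter_upwards [hmem] with z hz
    exact hpsi z hz
  rw [hev.deriv_eq]
  have h : HasDerivAt (fun z => a * z + lam * z / (alpha - z))
      (a * 1 + ((lam * 1) * (alpha - x) - lam * x * (0 - 1)) / (alpha - x) ^ 2) x := by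
    exact ((hasDerivAt_id x).const_mul a).add
      (((hasDerivAt_id x).const_mul lam).div
        ((hasDerivAt_const x alpha).sub (hasDerivAt_id x)) hne)
  rw [h.deriv]
  field_simp
  ring

theorem sum_inverse_derivs_eq_inv_drift
    (a lam alpha r : ℝ)
    (ha : a < 0) (hlam : 0 < lam) (halpha : 0 < alpha) (hr : 0 ≤ r)
    (psi : ℝ → ℝ)
    (hpsi : ∀ z : ℝ, z ≠ alpha → psi z = a * z + lam * z / (alpha - z))
    (ρ₁ ρ₂ : ℝ)
    (hρ₁ : ρ₁ ≤ 0) (hρ₂ : 0 < ρ₂)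
    (hroots : ∀ z : ℝ, z ≠ alpha → (psi z = r ↔ z = ρ₁ ∨ z = ρ₂))
    (hcase_pos : 0 < r → ρ₁ < 0)
    (hcase_zero : r = 0 → ρ₁ = 0 ∧ deriv psi 0 < 0)
    (hd₁ : deriv psi ρ₁ ≠ 0) (hd₂ : deriv psi ρ₂ ≠ 0) :
    1 / deriv psi ρ₁ + 1 / deriv psi ρ₂ = 1 / a ∧
    -deriv psi ρ₁ < deriv psi ρ₂ := by
  have ha' : a ≠ 0 := ne_of_lt ha
  have hρ₁α : ρ₁ ≠ alpha := by linarith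
  have hu : alpha - ρ₁ ≠ 0 := sub_ne_zero.mpr (Ne.symm hρ₁α)
  have hupos : 0 < alpha - ρ₁ := by linarith
  have hψρ₁ : psi ρ₁ = r := (hroots ρ₁ hρ₁α).mpr (Or.inl rfl)
  have e₁ : a * ρ₁ * (alpha - ρ₁) + lam * ρ₁ = r * (alpha - ρ₁) := by
    have h := hpsi ρ₁ hρ₁α
    rw [h] at hψρ₁
    field_simp at hψρ₁
    linarith [hψρ₁]
  -- ρ₂ ≠ alpha
  have hρ₂α : ρ₂ ≠ alpha := by
    intro hcontra
    set x₂ : ℝ := (a * alpha + lam + r) / a - ρ₁ with hx₂def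
    have hax₂ : a * x₂ = a * alpha + lam + r - a * ρ₁ := by
      rw [hx₂def]; field_simp
    have hQx₂ : a * x₂ * (alpha - x₂) + lam * x₂ = r * (alpha - x₂) := by
      linear_combination (ρ₁ - x₂) * hax₂ + e₁
    have hx₂α : x₂ ≠ alpha := by
      intro hxa
      rw [hxa] at hQx₂
      have hla : lam * alpha = 0 := by linarith [hQx₂]
      nlinarith
    have hx₂ρ₁ : x₂ ≠ ρ₁ := by
      intro hxr
      have hb : a * alpha + lam + r = 2 * a * ρ₁ := by
        rw [hxr] at hax₂; linarith
      have hsq : a * ρ₁ ^ 2 = r * alpha := by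
        linear_combination e₁ - ρ₁ * hb
      have hρ₁0 : ρ₁ = 0 := by
        by_contra hne
        have h1 : ρ₁ < 0 := lt_of_le_of_ne hρ₁ hne
        have h2 : 0 < ρ₁ ^ 2 := by positivity
        linarith [mul_nonneg hr halpha.le, mul_neg_of_neg_of_pos ha h2]
      have hr0 : r = 0 := by
        by_contra hrne
        have hrpos : 0 < r := lt_of_le_of_ne hr (Ne.symm hrne)
        exact absurd hρ₁0 (ne_of_lt (hcase_pos hrpos))
      obtain ⟨_, hd0⟩ := hcase_zero hr0
      have h0α : (0 : ℝ) ≠ alpha := by linarith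
      rw [deriv_psi_aux a lam alpha psi hpsi 0 h0α] at hd0
      rw [hρ₁0, hr0] at hb
      have hzero : a + lam * alpha / (alpha - 0) ^ 2 = 0 := by
        field_simp
        nlinarith [hb]
      linarith
    have hψx₂ : psi x₂ = r := by
      rw [hpsi x₂ hx₂α]
      have hux : alpha - x₂ ≠ 0 := sub_ne_zero.mpr (Ne.symm hx₂α)
      field_simp
      linarith [hQx₂]
    rcases (hroots x₂ hx₂α).mp hψx₂ with h | h
    · exact hx₂ρ₁ h
    · exact hx₂α (h.trans hcontra)
  have hv : alpha - ρ₂ ≠ 0 := sub_ne_zero.mpr (Ne.symm hρ₂α)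
  have hψρ₂ : psi ρ₂ = r := (hroots ρ₂ hρ₂α).mpr (Or.inr rfl)
  have e₂ : a * ρ₂ * (alpha - ρ₂) + lam * ρ₂ = r * (alpha - ρ₂) := by
    have h := hpsi ρ₂ hρ₂α
    rw [h] at hψρ₂
    field_simp at hψρ₂
    linarith [hψρ₂]
  -- Vieta
  have hρ₁₂ : ρ₁ < ρ₂ := lt_of_le_of_lt hρ₁ hρ₂
  have hne12 : ρ₁ - ρ₂ ≠ 0 := by linarith
  have hS : a * (ρ₁ + ρ₂) = a * alpha + lam + r := by
    have h0 : (ρ₁ - ρ₂) * (a * (ρ₁ + ρ₂) - (a * alpha + lam + r)) = 0 := by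
      linear_combination e₂ - e₁
    rcases mul_eq_zero.mp h0 with h | h
    · exact absurd h hne12
    · linarith
  have hP : a * ρ₁ * ρ₂ = r * alpha := by
    linear_combination ρ₁ * hS + e₁
  have key : a * (alpha - ρ₁) * (alpha - ρ₂) = -(lam * alpha) := by
    linear_combination hP - alpha * hS
  have hvpos : 0 < alpha - ρ₂ := by
    rcases lt_trichotomy (alpha - ρ₂) 0 with h | h | h
    · have h1 : (0:ℝ) < a * (alpha - ρ₁) * (alpha - ρ₂) :=
        mul_pos_of_neg_of_neg (mul_neg_of_neg_of_pos ha hupos) h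
      linarith [key, mul_pos hlam halpha]
    · exact absurd h hv
    · exact h
  have hw : (alpha - ρ₁) - (alpha - ρ₂) ≠ 0 := by
    intro h; apply hne12; linarith
  have hwpos : 0 < (alpha - ρ₁) - (alpha - ρ₂) := by linarith
  -- explicit forms of the derivatives
  have hD₁ : deriv psi ρ₁ = a + lam * alpha / (alpha - ρ₁) ^ 2 :=
    deriv_psi_aux a lam alpha psi hpsi ρ₁ hρ₁α
  have hD₂ : deriv psi ρ₂ = a + lam * alpha / (alpha - ρ₂) ^ 2 :=
    deriv_psi_aux a lam alpha psi hpsi ρ₂ hρ₂α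
  have hval₁ : deriv psi ρ₁
      = a * ((alpha - ρ₁) - (alpha - ρ₂)) / (alpha - ρ₁) := by
    rw [hD₁]
    field_simp
    linear_combination key
  have hval₂ : deriv psi ρ₂
      = a * ((alpha - ρ₂) - (alpha - ρ₁)) / (alpha - ρ₂) := by
    rw [hD₂]
    field_simp
    linear_combination key
  have hn₁ : a * ((alpha - ρ₁) - (alpha - ρ₂)) ≠ 0 := mul_ne_zero ha' hw
  have hn₂ : a * ((alpha - ρ₂) - (alpha - ρ₁)) ≠ 0 := by
    intro h
    rcases mul_eq_zero.mp h with h' | h'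
    · exact ha' h'
    · exact hw (by linarith)
  have hmain : 1 / deriv psi ρ₁ + 1 / deriv psi ρ₂ = 1 / a := by
    rw [hval₁, hval₂]
    rw [one_div_div, one_div_div]
    rw [div_add_div _ _ hn₁ hn₂, div_eq_div_iff (mul_ne_zero hn₁ hn₂) ha']
    ring
  refine ⟨hmain, ?_⟩
  have hsum : deriv psi ρ₁ + deriv psi ρ₂
      = -a * ((alpha - ρ₁) - (alpha - ρ₂)) ^ 2 / ((alpha - ρ₁) * (alpha - ρ₂)) := by
    rw [hval₁, hval₂]
    field_simp
    ring
  have hpos : 0 < deriv psi ρ₁ + deriv psi ρ₂ := by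
    rw [hsum]
    apply div_pos
    · exact mul_pos (by linarith) (by positivity)
    · exact mul_pos hupos hvpos
  linarith
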